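/- Let K be a separably closed field and X a K-form of affine n-space (i.e., X_L ≅ 𝔸ⁿ_L for some finite extension L/K). Then the Picard group Pic(X) is a p-power torsion abelian group if char(K) = p > 0, and trivial if char(K) = 0. -/

import Mathlib

universe u

open TensorProduct

lemma aux_reduced {P : Type u} [CommRing P] [IsDomain P] [GCDMonoid P]
    (x : FractionRing P) : ∃ r s : P, s ≠ 0 ∧ IsRelPrime r s ∧
      x = algebraMap P (FractionRing P) r / algebraMap P (FractionRing P) s := by
  obtain ⟨r₀, s₀, hs₀, h⟩ := IsFractionRing.div_surjective (A := P) x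
  have hs₀' : s₀ ≠ 0 := nonZeroDivisors.ne_zero hs₀
  have hg : gcd r₀ s₀ ≠ 0 := fun h0 => hs₀' ((gcd_eq_zero_iff _ _).1 h0).2
  obtain ⟨r, hr⟩ := gcd_dvd_left r₀ s₀
  obtain ⟨s, hs⟩ := gcd_dvd_right r₀ s₀
  have h2 : Associated (gcd r₀ s₀) (gcd r₀ s₀ * gcd r s) := by
    have h3 := gcd_mul_left' (gcd r₀ s₀) r s
    rw [← hr, ← hs] at h3
    exact h3
  have hsne : s ≠ 0 := by rintro rfl; rw [mul_zero] at hs; exact hs₀' hs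
  have hinj := IsFractionRing.injective P (FractionRing P)
  refine ⟨r, s, hsne, ?_, ?_⟩
  · rw [← gcd_isUnit_iff_isRelPrime]
    obtain ⟨u, hu⟩ := h2.symm
    rw [mul_assoc] at hu
    nth_rewrite 2 [show gcd r₀ s₀ = gcd r₀ s₀ * 1 by ring] at hu
    have := mul_left_cancel₀ hg hu
    exact IsUnit.of_mul_eq_one _ this
  · have hgm : algebraMap P (FractionRing P) (gcd r₀ s₀) ≠ 0 := fun h0 =>
      hg ((injective_iff_map_eq_zero _).1 hinj _ h0)
    generalize gcd r₀ s₀ = g at hr hs hgm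
    rw [← h, hr, hs, map_mul, map_mul, mul_div_mul_left _ _ hgm]

lemma aux_span {P : Type u} [CommRing P] [IsDomain P] [UniqueFactorizationMonoid P]
    {ι : Type u} [Fintype ι] (α β : ι → FractionRing P)
    (hsum : ∑ i, α i * β i = 1)
    (hprod : ∀ i j, ∃ w : P, algebraMap P (FractionRing P) w = α i * β j) :
    ∃ t : FractionRing P, Submodule.span P (Set.range α) = Submodule.span P {t} := by
  classical
  letI := UniqueFactorizationMonoid.normalizationMonoid (α := P)
  letI := UniqueFactorizationMonoid.toNormalizedGCDMonoid P
  set φ := algebraMap P (FractionRing P) with hφ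
  have hinj : Function.Injective φ := IsFractionRing.injective P (FractionRing P)
  have hmapne : ∀ {z : P}, z ≠ 0 → φ z ≠ 0 := fun hz h0 =>
    hz ((injective_iff_map_eq_zero _).1 hinj _ h0)
  obtain ⟨d₀, hd₀⟩ := IsLocalization.exist_integer_multiples_of_finite (nonZeroDivisors P) α
  have hdne : (d₀ : P) ≠ 0 := nonZeroDivisors.ne_zero d₀.2
  have hdφ : φ (d₀ : P) ≠ 0 := hmapne hdne
  choose u hu using hd₀
  have hu' : ∀ i, φ (u i) = φ (d₀ : P) * α i := by
    intro i; rw [hu i, Algebra.smul_def]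
  set g : P := Finset.univ.gcd u with hgdef
  set t := φ g / φ (d₀ : P) with ht
  have key : ∀ j : ι, ∃ c : P, β j * t = φ c := by
    intro j
    obtain ⟨r, s, hsne, hrel, hrs⟩ := aux_reduced (P := P) (β j / φ (d₀ : P))
    have hsφ : φ s ≠ 0 := hmapne hsne
    have hcross : β j * φ s = φ r * φ (d₀ : P) := by
      rw [div_eq_div_iff hdφ hsφ] at hrs; exact hrs
    have hsd : ∀ i, s ∣ u i := by
      intro i
      obtain ⟨w, hw⟩ := hprod i j
      have h1 : φ (u i * r) = φ (w * s) := by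
        rw [map_mul, map_mul, hu', hw]
        calc φ (d₀ : P) * α i * φ r = α i * (φ r * φ (d₀ : P)) := by ring
        _ = α i * (β j * φ s) := by rw [hcross]
        _ = α i * β j * φ s := by ring
      exact hrel.symm.dvd_of_dvd_mul_right ⟨w, by rw [hinj h1, mul_comm]⟩
    obtain ⟨g', hg'⟩ : s ∣ g := Finset.dvd_gcd (fun i _ => hsd i)
    refine ⟨r * g', ?_⟩
    calc β j * t = (β j * φ s) * φ g / (φ (d₀ : P) * φ s) := by
          rw [ht]; field_simp
    _ = (φ r * φ (d₀ : P)) * φ (s * g') / (φ (d₀ : P) * φ s) := by rw [hcross, ← hg']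
    _ = φ (r * g') * ((φ (d₀ : P) * φ s) / (φ (d₀ : P) * φ s)) := by
          rw [map_mul, map_mul]; ring
    _ = φ (r * g') := by rw [div_self (mul_ne_zero hdφ hsφ), mul_one]
  -- not all α i are zero would contradict hsum if g = 0, but we don't even need that:
  refine ⟨t, le_antisymm ?_ ?_⟩
  · rw [Submodule.span_le]
    rintro _ ⟨i, rfl⟩
    obtain ⟨v, hv⟩ := Finset.gcd_dvd (f := u) (Finset.mem_univ i)
    refine Submodule.mem_span_singleton.2 ⟨v, ?_⟩
    rw [Algebra.smul_def, ht, ← hφ, ← mul_div_assoc, ← map_mul, mul_comm v g, ← hv, hu',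
      mul_div_cancel_left₀ _ hdφ]
  · rw [Submodule.span_le, Set.singleton_subset_iff]
    choose c hc using key
    have : t = ∑ i, c i • α i := by
      calc t = (∑ i, α i * β i) * t := by rw [hsum, one_mul]
      _ = ∑ i, c i • α i := by
          rw [Finset.sum_mul]
          refine Finset.sum_congr rfl fun i _ => ?_
          rw [Algebra.smul_def]
          show α i * β i * t = φ (c i) * α i
          rw [← hc i]; ring
    rw [this]
    exact Submodule.sum_mem _ fun i _ =>
      Submodule.smul_mem _ _ (Submodule.subset_span ⟨i, rfl⟩)

lemma aux_descend {A P : Type u} [CommRing A] [IsDomain A] [CommRing P] [IsDomain P]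
    (f : A →+* P) (ρ : P →+ A) (hρ1 : ρ 1 = 1)
    (hρ : ∀ (a : A) (x : P), ρ (f a * x) = a * ρ x)
    (φ : FractionRing A →+* FractionRing P)
    (hcomp : ∀ a : A, φ (algebraMap A (FractionRing A) a) = algebraMap P (FractionRing P) (f a))
    (T : Set (FractionRing A)) (s₀ : FractionRing A)
    (h : Submodule.span P (φ '' T) = Submodule.span P {φ s₀}) :
    Submodule.span A T = Submodule.span A {s₀} := by
  classical
  have hρf : ∀ a : A, ρ (f a) = a := fun a => by
    have := hρ a 1; rwa [mul_one, hρ1, mul_one] at this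
  have hψPinj : Function.Injective (algebraMap P (FractionRing P)) :=
    IsFractionRing.injective P (FractionRing P)
  apply le_antisymm
  · rw [Submodule.span_le]
    intro x hx
    have hmem : φ x ∈ Submodule.span P {φ s₀} := by
      rw [← h]; exact Submodule.subset_span ⟨x, hx, rfl⟩
    obtain ⟨p, hp⟩ := Submodule.mem_span_singleton.1 hmem
    obtain ⟨d₀, hd⟩ := IsLocalization.exist_integer_multiples_of_finite (nonZeroDivisors A)
      (fun b : Bool => cond b x s₀)
    have hdne : algebraMap A (FractionRing A) (d₀ : A) ≠ 0 :=
      IsFractionRing.to_map_ne_zero_of_mem_nonZeroDivisors d₀.2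
    obtain ⟨e₁, he₁⟩ := hd true
    obtain ⟨e₀, he₀⟩ := hd false
    rw [show (d₀ : A) • cond true x s₀ = algebraMap A (FractionRing A) (d₀ : A) * x by
      rw [Algebra.smul_def]; rfl] at he₁
    rw [show (d₀ : A) • cond false x s₀ = algebraMap A (FractionRing A) (d₀ : A) * s₀ by
      rw [Algebra.smul_def]; rfl] at he₀
    have hkey : f e₁ = f e₀ * p := by
      apply hψPinj
      calc algebraMap P (FractionRing P) (f e₁) = φ (algebraMap A (FractionRing A) e₁) :=
            (hcomp e₁).symm
      _ = φ (algebraMap A (FractionRing A) (d₀ : A)) * φ x := by rw [he₁, map_mul]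
      _ = φ (algebraMap A (FractionRing A) (d₀ : A)) * (p • φ s₀) := by rw [hp]
      _ = algebraMap P (FractionRing P) p *
            (φ (algebraMap A (FractionRing A) (d₀ : A)) * φ s₀) := by
            rw [Algebra.smul_def]; ring
      _ = algebraMap P (FractionRing P) p * φ (algebraMap A (FractionRing A) e₀) := by
            rw [← map_mul, ← he₀]
      _ = algebraMap P (FractionRing P) p * algebraMap P (FractionRing P) (f e₀) := by
            rw [hcomp]
      _ = algebraMap P (FractionRing P) (f e₀ * p) := by rw [← map_mul]; ring_nf
    have he : e₁ = e₀ * ρ p := by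
      calc e₁ = ρ (f e₁) := (hρf e₁).symm
      _ = ρ (f e₀ * p) := by rw [hkey]
      _ = e₀ * ρ p := hρ e₀ p
    refine Submodule.mem_span_singleton.2 ⟨ρ p, ?_⟩
    apply mul_left_cancel₀ hdne
    calc algebraMap A (FractionRing A) (d₀ : A) * (ρ p • s₀)
        = algebraMap A (FractionRing A) (ρ p) *
          (algebraMap A (FractionRing A) (d₀ : A) * s₀) := by rw [Algebra.smul_def]; ring
    _ = algebraMap A (FractionRing A) (ρ p) * algebraMap A (FractionRing A) e₀ := by rw [he₀]
    _ = algebraMap A (FractionRing A) (e₀ * ρ p) := by rw [← map_mul]; ring_nf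
    _ = algebraMap A (FractionRing A) e₁ := by rw [← he]
    _ = algebraMap A (FractionRing A) (d₀ : A) * x := he₁
  · rw [Submodule.span_le, Set.singleton_subset_iff]
    have hmem : φ s₀ ∈ Submodule.span P (φ '' T) := by
      rw [h]; exact Submodule.mem_span_singleton_self _
    obtain ⟨cf, hsupp, hsum⟩ := Submodule.mem_span_set.1 hmem
    have hchoice : ∀ z : cf.support, ∃ x, x ∈ T ∧ φ x = (z : FractionRing P) :=
      fun z => hsupp z.2
    choose xx hxT hxφ using hchoice
    obtain ⟨d₀, hd⟩ := IsLocalization.exist_integer_multiples_of_finite (nonZeroDivisors A)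
      (fun o : Option cf.support => o.elim s₀ xx)
    have hdne : algebraMap A (FractionRing A) (d₀ : A) ≠ 0 :=
      IsFractionRing.to_map_ne_zero_of_mem_nonZeroDivisors d₀.2
    choose e he using hd
    have he0 : algebraMap A (FractionRing A) (e none)
        = algebraMap A (FractionRing A) (d₀ : A) * s₀ := by
      have := he none; rwa [Algebra.smul_def] at this
    have heS : ∀ z : cf.support, algebraMap A (FractionRing A) (e (some z))
        = algebraMap A (FractionRing A) (d₀ : A) * xx z := by
      intro z; have := he (some z); rwa [Algebra.smul_def] at this
    have hkey : f (e none) = ∑ z ∈ cf.support.attach, f (e (some z)) * cf (z : FractionRing P) := by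
      apply hψPinj
      rw [map_sum]
      calc algebraMap P (FractionRing P) (f (e none))
          = φ (algebraMap A (FractionRing A) (e none)) := (hcomp _).symm
      _ = φ (algebraMap A (FractionRing A) (d₀ : A)) * φ s₀ := by rw [he0, map_mul]
      _ = φ (algebraMap A (FractionRing A) (d₀ : A)) *
            ∑ z ∈ cf.support.attach, cf (z : FractionRing P) • (z : FractionRing P) := by
            rw [← hsum, Finsupp.sum, ← Finset.sum_attach cf.support (fun z => cf z • z)]
      _ = ∑ z ∈ cf.support.attach,
            algebraMap P (FractionRing P) (f (e (some z)) * cf (z : FractionRing P)) := by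
            rw [Finset.mul_sum]
            refine Finset.sum_congr rfl fun z _ => ?_
            rw [Algebra.smul_def, map_mul]
            calc φ (algebraMap A (FractionRing A) (d₀ : A)) *
                  (algebraMap P (FractionRing P) (cf (z : FractionRing P)) * (z : FractionRing P))
                = (φ (algebraMap A (FractionRing A) (d₀ : A)) * φ (xx z)) *
                  algebraMap P (FractionRing P) (cf (z : FractionRing P)) := by rw [hxφ]; ring
            _ = φ (algebraMap A (FractionRing A) (d₀ : A) * xx z) *
                  algebraMap P (FractionRing P) (cf (z : FractionRing P)) := by rw [map_mul]
            _ = φ (algebraMap A (FractionRing A) (e (some z))) *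
                  algebraMap P (FractionRing P) (cf (z : FractionRing P)) := by rw [heS]
            _ = algebraMap P (FractionRing P) (f (e (some z))) *
                  algebraMap P (FractionRing P) (cf (z : FractionRing P)) := by rw [hcomp]
    have hesum : e none = ∑ z ∈ cf.support.attach, e (some z) * ρ (cf (z : FractionRing P)) := by
      calc e none = ρ (f (e none)) := (hρf _).symm
      _ = ∑ z ∈ cf.support.attach, ρ (f (e (some z)) * cf (z : FractionRing P)) := by
            rw [hkey, map_sum]
      _ = ∑ z ∈ cf.support.attach, e (some z) * ρ (cf (z : FractionRing P)) := by
            refine Finset.sum_congr rfl fun z _ => ?_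
            rw [hρ]
    have hfinal : s₀ = ∑ z ∈ cf.support.attach, ρ (cf (z : FractionRing P)) • xx z := by
      apply mul_left_cancel₀ hdne
      calc algebraMap A (FractionRing A) (d₀ : A) * s₀
          = algebraMap A (FractionRing A) (e none) := he0.symm
      _ = ∑ z ∈ cf.support.attach,
            algebraMap A (FractionRing A) (e (some z) * ρ (cf (z : FractionRing P))) := by
            rw [hesum, map_sum]
      _ = algebraMap A (FractionRing A) (d₀ : A) *
            ∑ z ∈ cf.support.attach, ρ (cf (z : FractionRing P)) • xx z := by
            rw [Finset.mul_sum]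
            refine Finset.sum_congr rfl fun z _ => ?_
            rw [map_mul, heS, Algebra.smul_def]; ring
    rw [hfinal]
    exact Submodule.sum_mem _ fun z _ =>
      Submodule.smul_mem _ _ (Submodule.subset_span (hxT z))

open scoped Pointwise nonZeroDivisors in
lemma aux_core {A : Type u} [CommRing A] [IsDomain A]
    {P : Type u} [CommRing P] [IsDomain P] [UniqueFactorizationMonoid P]
    (f : A →+* P) (ρ : P →+ A) (hρ1 : ρ 1 = 1)
    (hρ : ∀ (a : A) (x : P), ρ (f a * x) = a * ρ x)
    (q : ℕ) (hq0 : q ≠ 0) (hq : ∀ x : P, ∃ a : A, f a = x ^ q) :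
    ∀ c : ClassGroup A, c ^ q = 1 := by
  classical
  have hρf : ∀ a : A, ρ (f a) = a := fun a => by
    have := hρ a 1; rwa [mul_one, hρ1, mul_one] at this
  have finj : Function.Injective f := by
    intro a b hab
    have : ρ (f a) = ρ (f b) := by rw [hab]
    rwa [hρf, hρf] at this
  have hg : Function.Injective ((algebraMap P (FractionRing P)).comp f) :=
    (IsFractionRing.injective P (FractionRing P)).comp finj
  set φ : FractionRing A →+* FractionRing P := IsFractionRing.lift hg with hφdef
  have hcomp : ∀ a : A, φ (algebraMap A (FractionRing A) a)
      = algebraMap P (FractionRing P) (f a) := fun a => IsFractionRing.lift_algebraMap hg a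
  have hφpow : ∀ t : FractionRing P, ∃ s : FractionRing A, φ s = t ^ q := by
    intro t
    obtain ⟨r, s, hs, hrs⟩ := IsFractionRing.div_surjective (A := P) t
    obtain ⟨a₁, ha₁⟩ := hq r
    obtain ⟨a₂, ha₂⟩ := hq s
    have hsne : s ≠ 0 := nonZeroDivisors.ne_zero hs
    have ha₂ne : algebraMap A (FractionRing A) a₂ ≠ 0 := by
      rw [map_ne_zero_iff _ (IsFractionRing.injective A (FractionRing A))]
      intro h0
      rw [h0, map_zero] at ha₂
      exact pow_ne_zero q hsne ha₂.symm
    refine ⟨algebraMap A (FractionRing A) a₁ / algebraMap A (FractionRing A) a₂, ?_⟩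
    rw [map_div₀, hcomp, hcomp, ha₁, ha₂, ← hrs, div_pow, map_pow, map_pow]
  intro c
  refine ClassGroup.induction (K := FractionRing A) (fun I => ?_) c
  rw [← map_pow, ClassGroup.mk_eq_one_iff]
  set J : FractionalIdeal A⁰ (FractionRing A) := (I : FractionalIdeal A⁰ (FractionRing A))
    with hJdef
  set J' : FractionalIdeal A⁰ (FractionRing A) :=
    ((I⁻¹ : (FractionalIdeal A⁰ (FractionRing A))ˣ) : FractionalIdeal A⁰ (FractionRing A))
    with hJ'def
  have hII' : J * J' = 1 := I.mul_inv
  have hmul : ∀ x ∈ J, ∀ y ∈ J', ∃ aa : A, algebraMap A (FractionRing A) aa = x * y := by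
    intro x hx y hy
    have : x * y ∈ (1 : FractionalIdeal A⁰ (FractionRing A)) := by
      rw [← hII']; exact FractionalIdeal.mul_mem_mul hx hy
    exact (FractionalIdeal.mem_one_iff _).1 this
  have hone : (1 : FractionRing A) ∈
      (J : Submodule A (FractionRing A)) * (J' : Submodule A (FractionRing A)) := by
    rw [← FractionalIdeal.coe_mul, hII', FractionalIdeal.coe_one]
    exact Submodule.mem_one.2 ⟨1, map_one _⟩
  rw [Submodule.mul_eq_span_mul_set] at hone
  obtain ⟨cf, hsupp, hsum⟩ := Submodule.mem_span_set.1 hone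
  have hchoice : ∀ z : cf.support, ∃ x ∈ (J : Submodule A (FractionRing A)),
      ∃ y ∈ (J' : Submodule A (FractionRing A)), x * y = (z : FractionRing A) :=
    fun z => Set.mem_mul.1 (hsupp z.2)
  choose a ha bb hbb hab using hchoice
  set b : cf.support → FractionRing A := fun z => cf (z : FractionRing A) • bb z with hbdef
  have hbmem : ∀ z, b z ∈ (J' : Submodule A (FractionRing A)) :=
    fun z => Submodule.smul_mem _ _ (hbb z)
  have habsum : ∑ z ∈ cf.support.attach, a z * b z = 1 := by
    rw [← hsum, Finsupp.sum, ← Finset.sum_attach cf.support (fun z => cf z • z)]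
    refine Finset.sum_congr rfl fun z _ => ?_
    simp only [hbdef]
    rw [Algebra.smul_def, Algebra.smul_def, ← hab z]
    ring
  -- J is spanned by the a z
  have hJspan : (J : Submodule A (FractionRing A)) = Submodule.span A (Set.range a) := by
    apply le_antisymm
    · intro x hx
      have hxb : ∀ z : cf.support, ∃ cz : A,
          algebraMap A (FractionRing A) cz = x * b z := fun z => hmul x hx (b z) (hbmem z)
      choose cc hcc using hxb
      have : x = ∑ z ∈ cf.support.attach, cc z • a z := by
        calc x = x * ∑ z ∈ cf.support.attach, a z * b z := by rw [habsum, mul_one]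
        _ = ∑ z ∈ cf.support.attach, cc z • a z := by
            rw [Finset.mul_sum]
            refine Finset.sum_congr rfl fun z _ => ?_
            calc x * (a z * b z) = (x * b z) * a z := by ring
            _ = algebraMap A (FractionRing A) (cc z) * a z := by rw [hcc z]
            _ = cc z • a z := (Algebra.smul_def _ _).symm
      rw [this]
      exact Submodule.sum_mem _ fun z _ =>
        Submodule.smul_mem _ _ (Submodule.subset_span ⟨z, rfl⟩)
    · rw [Submodule.span_le]
      rintro _ ⟨z, rfl⟩
      exact ha z
  -- push to P
  have hsumφ : ∑ z ∈ cf.support.attach, φ (a z) * φ (b z) = 1 := by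
    rw [← map_one φ, ← habsum, map_sum]
    exact Finset.sum_congr rfl fun z _ => (map_mul φ _ _).symm
  have hprodφ : ∀ z w : cf.support, ∃ p : P,
      algebraMap P (FractionRing P) p = φ (a z) * φ (b w) := by
    intro z w
    obtain ⟨aa, haa⟩ := hmul (a z) (ha z) (b w) (hbmem w)
    exact ⟨f aa, by rw [← hcomp, haa, map_mul]⟩
  obtain ⟨t, hspanP⟩ := aux_span (fun z => φ (a z)) (fun z => φ (b z)) hsumφ hprodφ
  obtain ⟨s₀, hs₀⟩ := hφpow t
  -- span of the q-th power
  have hPow : Submodule.span P (φ '' (Set.range a ^ q)) = Submodule.span P {φ s₀} := by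
    rw [Set.image_pow, ← Submodule.span_pow]
    have : φ '' Set.range a = Set.range (fun z => φ (a z)) := by
      rw [← Set.range_comp]; rfl
    rw [this, hspanP, Submodule.span_pow, Set.singleton_pow, hs₀]
  have hdes := aux_descend f ρ hρ1 hρ φ hcomp (Set.range a ^ q) s₀ hPow
  refine ⟨⟨s₀, ?_⟩⟩
  rw [Units.val_pow_eq_pow_val, FractionalIdeal.coe_pow, ← hJdef, hJspan, Submodule.span_pow,
    hdes]

open TensorProduct in
lemma aux_retract (K L A : Type u) [Field K] [Field L] [Algebra K L]
    [CommRing A] [Algebra K A] :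
    ∃ ρ : (L ⊗[K] A) →+ A, ρ 1 = 1 ∧ ∀ (a : A) (x : L ⊗[K] A),
      ρ ((Algebra.TensorProduct.includeRight a : L ⊗[K] A) * x) = a * ρ x := by
  classical
  have hli := LinearIndepOn.singleton (R := K) (v := (id : L → L)) (i := (1 : L)) (one_ne_zero : (1 : L) ≠ 0)
  let bb := Module.Basis.extend hli
  have hmem : (1 : L) ∈ hli.extend (Set.subset_univ _) := hli.subset_extend _ rfl
  let π₀ : L →ₗ[K] K := bb.coord ⟨1, hmem⟩
  have hπ1 : π₀ 1 = 1 := by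
    have hb : bb ⟨1, hmem⟩ = 1 := Module.Basis.extend_apply_self hli _
    show bb.coord ⟨1, hmem⟩ 1 = 1
    calc bb.coord ⟨1, hmem⟩ 1 = bb.coord ⟨1, hmem⟩ (bb ⟨1, hmem⟩) := by rw [hb]
    _ = 1 := by rw [Module.Basis.coord_apply, Module.Basis.repr_self, Finsupp.single_eq_same]
  let ρL : L ⊗[K] A →ₗ[K] A :=
    (TensorProduct.lid K A).toLinearMap.comp (TensorProduct.map π₀ LinearMap.id)
  have htm : ∀ (l : L) (a : A), ρL (l ⊗ₜ[K] a) = π₀ l • a := by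
    intro l a
    simp [ρL, TensorProduct.map_tmul, TensorProduct.lid_tmul]
  refine ⟨ρL.toAddMonoidHom, ?_, ?_⟩
  · show ρL 1 = 1
    rw [Algebra.TensorProduct.one_def, htm, hπ1, one_smul]
  · intro a x
    show ρL (_ * x) = a * ρL x
    induction x using TensorProduct.induction_on with
    | zero => simp
    | tmul l a' =>
        rw [Algebra.TensorProduct.includeRight_apply, Algebra.TensorProduct.tmul_mul_tmul,
          one_mul, htm, htm, mul_smul_comm]
    | add x y hx hy =>
        rw [mul_add, map_add, hx, hy, map_add, mul_add]

lemma aux_insep {K L : Type u} [Field K] [Field L] [Algebra K L] [FiniteDimensional K L]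
    [IsSepClosed K] (p : ℕ) (hp : p.Prime) (hc : CharP K p) :
    ∃ k : ℕ, ∀ l : L, ∃ c : K, algebraMap K L c = l ^ p ^ k := by
  classical
  haveI := hc
  haveI : ExpChar K p := ExpChar.prime hp
  haveI : CharP L p := charP_of_injective_algebraMap (algebraMap K L).injective p
  haveI : ExpChar L p := ExpChar.prime hp
  haveI : Algebra.IsAlgebraic K L := Algebra.IsAlgebraic.of_finite K L
  haveI : IsPurelyInseparable K L := inferInstance
  obtain ⟨m, s, hs⟩ := Module.Finite.exists_fin (R := K) (M := L)
  have hpm : ∀ i : Fin m, ∃ k : ℕ, (s i) ^ p ^ k ∈ (algebraMap K L).range := fun i =>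
    IsPurelyInseparable.pow_mem K p (s i)
  choose k hk using hpm
  set N := Finset.univ.sup k with hN
  -- the subalgebra of elements whose p^N-th power lies in K
  let S : Subalgebra K L :=
    { carrier := {x : L | ∃ c : K, algebraMap K L c = x ^ p ^ N}
      mul_mem' := by
        rintro x y ⟨c₁, hc₁⟩ ⟨c₂, hc₂⟩
        exact ⟨c₁ * c₂, by rw [map_mul, hc₁, hc₂, mul_pow]⟩
      add_mem' := by
        rintro x y ⟨c₁, hc₁⟩ ⟨c₂, hc₂⟩
        exact ⟨c₁ + c₂, by rw [map_add, hc₁, hc₂, add_pow_expChar_pow]⟩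
      algebraMap_mem' := fun r => ⟨r ^ p ^ N, by rw [map_pow]⟩ }
  have hsS : ∀ i, s i ∈ S := by
    intro i
    obtain ⟨c, hc⟩ := hk i
    have hle : k i ≤ N := Finset.le_sup (Finset.mem_univ i)
    refine ⟨c ^ p ^ (N - k i), ?_⟩
    rw [map_pow, hc, ← pow_mul, ← pow_add, Nat.add_sub_cancel' hle]
  have hStop : ∀ l : L, l ∈ S := by
    intro l
    have : Submodule.span K (Set.range s) ≤ Subalgebra.toSubmodule S := by
      rw [Submodule.span_le]
      rintro _ ⟨i, rfl⟩
      exact hsS i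
    rw [hs] at this
    exact this Submodule.mem_top
  exact ⟨N, fun l => hStop l⟩


/-- Let `K` be a separably closed field and `X = Spec A` a `K`-form
of affine `n`-space, i.e. `L ⊗_K A ≅ L[x₁, …, xₙ]` for some finite extension `L/K`.
Then the Picard group of `X` — which, `A` being a domain, is the group `ClassGroup A`
of invertible fractional ideals modulo principal ones — is `p`-power torsion if
`char K = p > 0`, and trivial if `char K = 0`. -/
theorem stmt17 {K : Type u} [Field K] [IsSepClosed K]
    {A : Type u} [CommRing A] [IsDomain A] [Algebra K A]
    (n : ℕ) (L : Type u) [Field L] [Algebra K L] [FiniteDimensional K L]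
    (hform : Nonempty ((L ⊗[K] A) ≃ₐ[L] MvPolynomial (Fin n) L)) :
    (∀ p : ℕ, p.Prime → CharP K p →
      ∀ c : ClassGroup A, ∃ k : ℕ, c ^ (p ^ k) = 1) ∧
    (CharZero K → ∀ c : ClassGroup A, c = 1) := by
  classical
  obtain ⟨e⟩ := hform
  let f₀ : A →+* L ⊗[K] A :=
    (Algebra.TensorProduct.includeRight (R := K) (A := L) (B := A)).toRingHom
  let f : A →+* MvPolynomial (Fin n) L := e.toAlgHom.toRingHom.comp f₀
  obtain ⟨ρ₀, hρ₀1, hρ₀⟩ := aux_retract K L A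
  let ρ : MvPolynomial (Fin n) L →+ A := AddMonoidHom.mk' (fun x => ρ₀ (e.symm x))
    (fun x y => by rw [map_add, map_add])
  have hρ1 : ρ 1 = 1 := by
    show ρ₀ (e.symm 1) = 1
    rw [map_one, hρ₀1]
  have hρ : ∀ (a : A) (x : MvPolynomial (Fin n) L), ρ (f a * x) = a * ρ x := by
    intro a x
    show ρ₀ (e.symm (f a * x)) = a * ρ₀ (e.symm x)
    have : e.symm (f a * x) = f₀ a * e.symm x := by
      rw [map_mul]
      congr 1
      exact e.symm_apply_apply (f₀ a)
    rw [this]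
    exact hρ₀ a (e.symm x)
  -- transferring the power condition through e
  have htrans : ∀ q : ℕ, (∀ x : L ⊗[K] A, ∃ a : A, f₀ a = x ^ q) →
      ∀ x : MvPolynomial (Fin n) L, ∃ a : A, f a = x ^ q := by
    intro q hB x
    obtain ⟨a, ha⟩ := hB (e.symm x)
    refine ⟨a, ?_⟩
    show e (f₀ a) = x ^ q
    rw [ha, map_pow, e.apply_symm_apply]
  constructor
  · -- characteristic p case
    intro p hp hc c
    haveI := hc
    haveI : CharP L p := charP_of_injective_algebraMap (algebraMap K L).injective p
    haveI : CharP (MvPolynomial (Fin n) L) p := inferInstance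
    haveI : CharP (L ⊗[K] A) p :=
      charP_of_injective_ringHom (f := e.symm.toAlgHom.toRingHom) e.symm.injective p
    haveI : ExpChar (L ⊗[K] A) p := ExpChar.prime hp
    obtain ⟨k, hk⟩ := aux_insep (L := L) p hp hc
    have hB : ∀ x : L ⊗[K] A, ∃ a : A, f₀ a = x ^ p ^ k := by
      intro x
      induction x using TensorProduct.induction_on with
      | zero =>
          refine ⟨0, ?_⟩
          rw [map_zero, zero_pow (pow_ne_zero k hp.ne_zero)]
      | tmul l a =>
          obtain ⟨c', hc'⟩ := hk l
          refine ⟨c' • a ^ p ^ k, ?_⟩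
          show (1 : L) ⊗ₜ[K] (c' • a ^ p ^ k) = _
          rw [Algebra.TensorProduct.tmul_pow, ← hc', Algebra.algebraMap_eq_smul_one,
            ← TensorProduct.smul_tmul]
      | add x y hx hy =>
          obtain ⟨a₁, ha₁⟩ := hx
          obtain ⟨a₂, ha₂⟩ := hy
          refine ⟨a₁ + a₂, ?_⟩
          rw [map_add, ha₁, ha₂, add_pow_expChar_pow]
    exact ⟨k, aux_core f ρ hρ1 hρ (p ^ k) (pow_ne_zero k hp.ne_zero) (htrans _ hB) c⟩
  · -- characteristic zero case
    intro hchar c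
    haveI := hchar
    haveI : IsAlgClosed K := inferInstance
    haveI : Algebra.IsIntegral K L := Algebra.IsIntegral.of_finite K L
    have hB : ∀ x : L ⊗[K] A, ∃ a : A, f₀ a = x ^ 1 := by
      intro x
      rw [pow_one]
      induction x using TensorProduct.induction_on with
      | zero => exact ⟨0, map_zero _⟩
      | tmul l a =>
          obtain ⟨c', hc'⟩ := (IsAlgClosed.algebraMap_bijective_of_isIntegral (k := K)).2 l
          refine ⟨c' • a, ?_⟩
          show (1 : L) ⊗ₜ[K] (c' • a) = _
          rw [← hc', Algebra.algebraMap_eq_smul_one, ← TensorProduct.smul_tmul]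
      | add x y hx hy =>
          obtain ⟨a₁, ha₁⟩ := hx
          obtain ⟨a₂, ha₂⟩ := hy
          exact ⟨a₁ + a₂, by rw [map_add, ha₁, ha₂]⟩
    have := aux_core f ρ hρ1 hρ 1 one_ne_zero (htrans 1 hB) c
    rwa [pow_one] at this
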